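/- There exist a constant C > 0 and an integer n₀ such that for all n ≥ n₀ and all integers k with 1 ≤ k ≤ n−1, |N(n,k) − (n+k−3 + k/(2(n+k)))·N(n,k−1)| ≤ (C/n)·N(n,k−1). -/

import Mathlib

/-- Odd double factorial: `ddf m` equals `m!!` for odd `m`, and `ddf 0 = 1`
(so that `ddf (2*n - 5)` with truncated subtraction encodes `(2n-5)!!`
with the convention `(-1)!! = 1`). -/
def ddf : ℕ → ℚ
  | 0 => 1
  | 1 => 1
  | n + 2 => (n + 2) * ddf n

/-- `N n k` is the number of one-component galled networks with `n - 1` leaves whose `k`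
reticulation-node children are labeled `1, …, k`, defined by the initial values
`N(n,0) = (2n-5)!!`, `N(n,1) = (n-2)(2n-5)!!` and the Gunawan--Rathin--Zhang recurrence. -/
def N : ℕ → ℕ → ℚ
  | n, 0 => ddf (2 * n - 5)
  | n, 1 => ((n : ℚ) - 2) * ddf (2 * n - 5)
  | n, k + 2 =>
      ((n : ℚ) + (k + 2) - 3) * N n (k + 1) + ((k : ℚ) + 1) * N n k
        + (1 / 2) * ∑ d ∈ Finset.Icc 1 (k + 1),
            (((k + 1).choose d : ℚ)) * ddf (2 * d - 1) *
              (N (n - d) (k + 1 - d) - N (n - d + 1) (k + 1 - d))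
  termination_by n k => k
  decreasing_by all_goals omega

lemma ddf_pos (m : ℕ) : 0 < ddf m := by
  induction m using ddf.induct with
  | case1 => norm_num [ddf]
  | case2 => norm_num [ddf]
  | case3 n ih => rw [ddf]; positivity

lemma N_zero (n : ℕ) : N n 0 = ddf (2 * n - 5) := by rw [N]
lemma N_one (n : ℕ) : N n 1 = ((n : ℚ) - 2) * ddf (2 * n - 5) := by rw [N]
lemma N_rec (n k : ℕ) : N n (k+2) =
      ((n : ℚ) + (k + 2) - 3) * N n (k + 1) + ((k : ℚ) + 1) * N n k
        + (1 / 2) * ∑ d ∈ Finset.Icc 1 (k + 1),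
            (((k + 1).choose d : ℚ)) * ddf (2 * d - 1) *
              (N (n - d) (k + 1 - d) - N (n - d + 1) (k + 1 - d)) := by rw [N]

lemma N_zero_pos (n : ℕ) : 0 < N n 0 := by rw [N_zero]; exact ddf_pos _

/-- growth at level 0 : (2m-3) * N m 0 = N (m+1) 0 for m ≥ 2 -/
lemma N0_grow {m : ℕ} (hm : 2 ≤ m) : (2*(m:ℚ)-3) * N m 0 = N (m+1) 0 := by
  rcases Nat.lt_or_ge m 3 with h | h
  · interval_cases m
    · norm_num [N_zero, ddf]
  · rw [N_zero, N_zero]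
    have h1 : 2 * (m+1) - 5 = (2*m-5) + 2 := by omega
    rw [h1, ddf]
    have h2 : ((2*m-5 : ℕ) : ℚ) = 2*(m:ℚ) - 5 := by
      have : (5:ℕ) ≤ 2*m := by omega
      push_cast [Nat.cast_sub this]; ring
    rw [h2]; ring

/-- The main two-sided invariant up to level K. -/
def Hyp (K : ℕ) : Prop := ∀ j, 1 ≤ j → j ≤ K → ∀ m : ℕ, 3 ≤ m → j + 1 ≤ m →
  ((m:ℚ)+j-3) * N m (j-1) ≤ N m j ∧ N m j ≤ ((m:ℚ)+j-2) * N m (j-1)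

lemma hyp_pos {K : ℕ} (h : Hyp K) : ∀ j ≤ K, ∀ m : ℕ, 3 ≤ m → j + 1 ≤ m → 0 < N m j := by
  intro j
  induction j with
  | zero => intro _ m _ _; exact N_zero_pos m
  | succ j ih =>
    intro hjK m hm hjm
    have h1 := (h (j+1) (by omega) hjK m hm hjm).1
    have h2 : 0 < N m j := ih (by omega) m hm (by omega)
    have h3 : (0:ℚ) < (m:ℚ) + (j+1) - 3 := by
      have : (3:ℚ) ≤ (m:ℚ) := by exact_mod_cast hm
      push_cast; linarith
    calc (0:ℚ) < ((m:ℚ)+(j+1)-3) * N m j := by positivity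
    _ ≤ N m (j+1) := by simpa using h1

lemma hyp_grow {K : ℕ} (h : Hyp K) : ∀ j ≤ K, ∀ m : ℕ, 2 ≤ m → j + 2 ≤ m →
    (2*(m:ℚ)-3) * N m j ≤ N (m+1) j := by
  intro j
  induction j with
  | zero => intro _ m hm _; exact (N0_grow hm).le
  | succ j ih =>
    intro hjK m hm hjm
    have hm3 : 3 ≤ m := by omega
    have hup := (h (j+1) (by omega) hjK m hm3 (by omega)).2
    have hlo := (h (j+1) (by omega) hjK (m+1) (by omega) (by omega)).1
    have hg : (2*(m:ℚ)-3) * N m j ≤ N (m+1) j := ih (by omega) m hm (by omega)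
    have hpos : 0 < N m j := hyp_pos h j (by omega) m hm3 (by omega)
    have hpos' : 0 < N (m+1) j := hyp_pos h j (by omega) (m+1) (by omega) (by omega)
    have hc : ((m:ℚ)) ≥ 3 := by exact_mod_cast hm3
    -- N (m+1) (j+1) ≥ (m+j-1) * N (m+1) j ≥ (m+j-1)(2m-3) N m j ≥ (2m-3) * N m (j+1)
    have e1 : ((m+1:ℕ):ℚ) + ((j+1:ℕ):ℚ) - 3 = (m:ℚ) + j - 1 := by push_cast; ring
    have e2 : ((m:ℚ)) + ((j+1:ℕ):ℚ) - 2 = (m:ℚ) + j - 1 := by push_cast; ring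
    rw [e1, Nat.add_sub_cancel] at hlo
    rw [e2, Nat.add_sub_cancel] at hup
    have hmj : (0:ℚ) ≤ (m:ℚ) + j - 1 := by
      have : (0:ℚ) ≤ (j:ℚ) := by positivity
      linarith
    have h23 : (0:ℚ) ≤ 2*(m:ℚ)-3 := by linarith
    have s2 : ((m:ℚ)+j-1) * ((2*(m:ℚ)-3) * N m j) ≤ ((m:ℚ)+j-1) * N (m+1) j :=
      mul_le_mul_of_nonneg_left hg hmj
    have s4 : (2*(m:ℚ)-3) * N m (j+1) ≤ (2*(m:ℚ)-3) * (((m:ℚ)+j-1) * N m j) :=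
      mul_le_mul_of_nonneg_left hup h23
    calc (2*(m:ℚ)-3) * N m (j+1) ≤ (2*(m:ℚ)-3) * (((m:ℚ)+j-1) * N m j) := s4
      _ = ((m:ℚ)+j-1) * ((2*(m:ℚ)-3) * N m j) := by ring
      _ ≤ ((m:ℚ)+j-1) * N (m+1) j := s2
      _ ≤ N (m+1) (j+1) := hlo

lemma hyp_pos' {K : ℕ} (h : Hyp K) : ∀ j ≤ K, ∀ m : ℕ, 2 ≤ m → j + 2 ≤ m → 0 < N m j := by
  intro j hj m hm hjm
  rcases Nat.eq_zero_or_pos j with rfl | hj1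
  · exact N_zero_pos m
  · exact hyp_pos h j hj m (by omega) (by omega)

lemma hyp_mono {K : ℕ} (h : Hyp K) : ∀ j ≤ K, ∀ m : ℕ, 2 ≤ m → j + 2 ≤ m →
    N m j ≤ N (m+1) j := by
  intro j hj m hm hjm
  have hp : 0 < N m j := hyp_pos' h j hj m hm hjm
  have hg := hyp_grow h j hj m hm hjm
  have : (m:ℚ) ≥ 2 := by exact_mod_cast hm
  nlinarith

set_option maxHeartbeats 1000000 in
/-- Tail bound: for `2 ≤ d ≤ k-1`, the `d`-th summand weight is at most `(2/3)^(d-2) * V`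
where `V = 3 * C(k-1,2) / ((2n-5)(n+k-5)) * N n (k-2)`. -/
lemma hyp_W {K n k : ℕ} (h : Hyp K) (hk3 : 3 ≤ k) (hkK : k ≤ K + 1) (hkn : k + 1 ≤ n) :
    ∀ d, 2 ≤ d → d + 1 ≤ k →
    ((k-1).choose d : ℚ) * ddf (2*d-1) * N (n-d+1) (k-1-d) ≤
      (2/3)^(d-2) * ((3 * (((k:ℚ)-1)*((k:ℚ)-2)/2)) / ((2*(n:ℚ)-5) * ((n:ℚ)+(k:ℚ)-5)) * N n (k-2)) := by
  have hkQ : (3:ℚ) ≤ (k:ℚ) := by exact_mod_cast hk3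
  have hnQ : (k:ℚ) + 1 ≤ (n:ℚ) := by exact_mod_cast hkn
  have hden : (0:ℚ) < (2*(n:ℚ)-5) * ((n:ℚ)+(k:ℚ)-5) := by
    apply mul_pos <;> linarith
  -- generic step relation: for 2 ≤ d ≤ k-1,
  -- (n+k-2d-1)(2n-2d-1) * N (n-d+1) (k-1-d) ≤ N (n-d+2) (k-d)
  have step : ∀ d, 2 ≤ d → d + 1 ≤ k →
      (((n:ℚ)+(k:ℚ)-2*d-1) * (2*(n:ℚ)-2*d-1)) * N (n-d+1) (k-1-d) ≤ N (n-d+2) (k-d) := by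
    intro d hd2 hdk
    have hP := (h (k-d) (by omega) (by omega) (n-d+2) (by omega) (by omega)).1
    have hG := hyp_grow h (k-1-d) (by omega) (n-d+1) (by omega) (by omega)
    have e1 : ((n-d+2:ℕ):ℚ) + ((k-d:ℕ):ℚ) - 3 = (n:ℚ)+(k:ℚ)-2*d-1 := by
      push_cast [Nat.cast_sub (by omega : d ≤ n), Nat.cast_sub (by omega : d ≤ k)]; ring
    have e2 : (k-d) - 1 = k-1-d := by omega
    have e3 : (2*((n-d+1:ℕ):ℚ)-3) = 2*(n:ℚ)-2*d-1 := by
      push_cast [Nat.cast_sub (by omega : d ≤ n)]; ring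
    have e4 : (n-d+1) + 1 = n-d+2 := by omega
    rw [e1, e2] at hP
    rw [e3, e4] at hG
    have hpos : 0 < N (n-d+1) (k-1-d) := hyp_pos' h (k-1-d) (by omega) (n-d+1) (by omega) (by omega)
    have hc1 : (0:ℚ) ≤ (n:ℚ)+(k:ℚ)-2*d-1 := by
      have hdQ : ((d:ℚ)) + 1 ≤ (k:ℚ) := by exact_mod_cast hdk
      linarith
    calc ((n:ℚ)+(k:ℚ)-2*d-1) * (2*(n:ℚ)-2*d-1) * N (n-d+1) (k-1-d)
        = ((n:ℚ)+(k:ℚ)-2*d-1) * ((2*(n:ℚ)-2*d-1) * N (n-d+1) (k-1-d)) := by ring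
      _ ≤ ((n:ℚ)+(k:ℚ)-2*d-1) * N (n-d+2) (k-1-d) := mul_le_mul_of_nonneg_left hG hc1
      _ ≤ N (n-d+2) (k-d) := hP
  intro d hd2
  induction d, hd2 using Nat.le_induction with
  | base =>
    intro hdk
    have hs := step 2 le_rfl hdk
    have e5 : n - 2 + 2 = n := by omega
    rw [e5] at hs
    have hch : (((k-1).choose 2 : ℕ) : ℚ) = ((k:ℚ)-1)*((k:ℚ)-2)/2 := by
      rw [Nat.cast_choose_two]
      rw [Nat.cast_sub (by omega : 1 ≤ k)]
      push_cast; ring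
    have hd3 : ddf (2*2-1) = 3 := by norm_num [ddf]
    rw [hd3, hch]
    have hXpos : 0 < N (n-2+1) (k-1-2) :=
      hyp_pos' h (k-1-2) (by omega) (n-2+1) (by omega) (by omega)
    have hCq : (0:ℚ) ≤ ((k:ℚ)-1)*((k:ℚ)-2)/2 := by
      have := hkQ; nlinarith
    have h9 : (3 * (((k:ℚ)-1)*((k:ℚ)-2)/2)) / ((2*(n:ℚ)-5) * ((n:ℚ)+(k:ℚ)-5)) * N n (k-2)
        = (3 * (((k:ℚ)-1)*((k:ℚ)-2)/2) * N n (k-2)) / ((2*(n:ℚ)-5) * ((n:ℚ)+(k:ℚ)-5)) := by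
      ring
    rw [pow_zero, one_mul, h9, le_div_iff₀ hden]
    nlinarith [mul_le_mul_of_nonneg_left hs hCq]
  | succ d hd ih =>
    intro hdk
    have hdk' : d + 1 ≤ k := by omega
    have IH := ih hdk'
    have hs := step (d+1) (by omega) hdk
    -- rewrite indices in hs : (n-(d+1)+2) = n-d+1, k-(d+1) = k-1-d, n-(d+1)+1 = n-d, k-1-(d+1) = k-2-d
    have i1 : n-(d+1)+2 = n-d+1 := by omega
    have i2 : k-(d+1) = k-1-d := by omega
    have i3 : n-(d+1)+1 = n-d := by omega
    have i4 : k-1-(d+1) = k-2-d := by omega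
    rw [i1, i2, i3, i4] at hs
    rw [i3, i4]
    -- ddf identity
    have f2 : ddf (2*(d+1)-1) = (2*(d:ℚ)+1) * ddf (2*d-1) := by
      have e : 2*(d+1)-1 = (2*d-1)+2 := by omega
      rw [e, ddf]
      have : ((2*d-1:ℕ):ℚ) = 2*(d:ℚ)-1 := by
        push_cast [Nat.cast_sub (by omega : 1 ≤ 2*d)]; ring
      rw [this]; ring
    -- choose identity
    have f1 : (((k-1).choose (d+1) : ℕ):ℚ) * ((d:ℚ)+1) =
        (((k-1).choose d : ℕ):ℚ) * ((k:ℚ)-1-(d:ℚ)) := by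
      have hnat := Nat.choose_succ_right_eq (k-1) d
      have : (((k-1).choose (d+1)) * (d+1) : ℕ) = ((k-1).choose d) * (k-1-d) := hnat
      have := congrArg (fun x : ℕ => (x:ℚ)) this
      push_cast [Nat.cast_sub (by omega : d ≤ k-1), Nat.cast_sub (by omega : 1 ≤ k)] at this
      convert this using 2 <;> push_cast <;> ring
    set a : ℚ := (((k-1).choose d : ℕ):ℚ) with ha
    set b : ℚ := ddf (2*d-1) with hb
    set X : ℚ := N (n-d) (k-2-d) with hX
    set Y : ℚ := N (n-d+1) (k-1-d) with hY
    have hapos : (0:ℚ) < a := by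
      rw [ha]; exact_mod_cast Nat.choose_pos (by omega : d ≤ k-1)
    have hbpos : (0:ℚ) < b := ddf_pos _
    have hXpos : (0:ℚ) < X := hyp_pos' h (k-2-d) (by omega) (n-d) (by omega) (by omega)
    have hYpos : (0:ℚ) < Y := hyp_pos' h (k-1-d) (by omega) (n-d+1) (by omega) (by omega)
    have hdQ : ((d:ℚ)) + 2 ≤ (k:ℚ) := by exact_mod_cast hdk
    -- hs : ((n+k-2(d+1)-1)*(2n-2(d+1)-1)) * X ≤ Y
    have hsQ : (((n:ℚ)+(k:ℚ)-2*(d:ℚ)-3) * (2*(n:ℚ)-2*(d:ℚ)-3)) * X ≤ Y := by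
      have e : ((n:ℚ)+(k:ℚ)-2*((d+1:ℕ):ℚ)-1) * (2*(n:ℚ)-2*((d+1:ℕ):ℚ)-1)
          = ((n:ℚ)+(k:ℚ)-2*(d:ℚ)-3) * (2*(n:ℚ)-2*(d:ℚ)-3) := by push_cast; ring
      rw [e] at hs; exact hs
    -- numeric : 3*(k-1-d)*(2d+1) ≤ 2*(d+1)*(n+k-2d-3)*(2n-2d-3)
    have fnum : 3*((k:ℚ)-1-(d:ℚ))*(2*(d:ℚ)+1) ≤
        2*((d:ℚ)+1)*(((n:ℚ)+(k:ℚ)-2*(d:ℚ)-3) * (2*(n:ℚ)-2*(d:ℚ)-3)) := by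
      have h1 : ((k:ℚ))-1-(d:ℚ) ≥ 1 := by linarith
      have h2 : ((n:ℚ))+(k:ℚ)-2*(d:ℚ)-3 ≥ 2*((k:ℚ)-1-(d:ℚ)) := by linarith
      have h3 : 2*(n:ℚ)-2*(d:ℚ)-3 ≥ 3 := by linarith
      have h4 : ((d:ℚ)) ≥ 2 := by exact_mod_cast hd
      have p1 : (2*((k:ℚ)-1-(d:ℚ)))*3 ≤ ((n:ℚ)+(k:ℚ)-2*(d:ℚ)-3) * (2*(n:ℚ)-2*(d:ℚ)-3) :=
        mul_le_mul h2 h3 (by norm_num) (by linarith)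
      have p2 : 2*((d:ℚ)+1)*((2*((k:ℚ)-1-(d:ℚ)))*3) ≤
          2*((d:ℚ)+1)*(((n:ℚ)+(k:ℚ)-2*(d:ℚ)-3) * (2*(n:ℚ)-2*(d:ℚ)-3)) :=
        mul_le_mul_of_nonneg_left p1 (by positivity)
      have p3 : ((k:ℚ)-1-(d:ℚ))*(3*(2*(d:ℚ)+1)) ≤ ((k:ℚ)-1-(d:ℚ))*(12*((d:ℚ)+1)) :=
        mul_le_mul_of_nonneg_left (by linarith) (by linarith)
      linarith [p2, p3]
    -- main step : LHS_(d+1) ≤ (2/3) * (a * b * Y)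
    have main : (((k-1).choose (d+1) : ℕ):ℚ) * ddf (2*(d+1)-1) * X ≤ (2/3) * (a * b * Y) := by
      have hd1pos : (0:ℚ) < (d:ℚ)+1 := by positivity
      have h5 : ((k:ℚ)-1-(d:ℚ))*(2*(d:ℚ)+1) ≤
          (2/3)*((d:ℚ)+1)*(((n:ℚ)+(k:ℚ)-2*(d:ℚ)-3) * (2*(n:ℚ)-2*(d:ℚ)-3)) := by
        linarith [fnum]
      have h6 : (((k:ℚ)-1-(d:ℚ))*(2*(d:ℚ)+1))*(a*b*X) ≤
          ((2/3)*((d:ℚ)+1)*(((n:ℚ)+(k:ℚ)-2*(d:ℚ)-3) * (2*(n:ℚ)-2*(d:ℚ)-3)))*(a*b*X) :=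
        mul_le_mul_of_nonneg_right h5 (by positivity)
      have h7 : ((2/3)*((d:ℚ)+1)*a*b)*((((n:ℚ)+(k:ℚ)-2*(d:ℚ)-3) * (2*(n:ℚ)-2*(d:ℚ)-3))*X) ≤
          ((2/3)*((d:ℚ)+1)*a*b)*Y :=
        mul_le_mul_of_nonneg_left hsQ (by positivity)
      have big : ((d:ℚ)+1) * ((((k-1).choose (d+1) : ℕ):ℚ) * ((2*(d:ℚ)+1) * b) * X) ≤
          ((d:ℚ)+1) * ((2/3) * (a * b * Y)) := by
        have lhs_eq : ((d:ℚ)+1) * ((((k-1).choose (d+1) : ℕ):ℚ) * ((2*(d:ℚ)+1) * b) * X)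
            = (a * ((k:ℚ)-1-(d:ℚ))) * ((2*(d:ℚ)+1) * b) * X := by
          linear_combination ((2*(d:ℚ)+1) * b * X) * f1
        rw [lhs_eq]
        linarith [h6, h7]
      rw [f2]
      exact le_of_mul_le_mul_left big hd1pos
    calc (((k-1).choose (d+1) : ℕ):ℚ) * ddf (2*(d+1)-1) * X ≤ (2/3) * (a * b * Y) := main
      _ ≤ (2/3) * ((2/3)^(d-2) * ((3 * (((k:ℚ)-1)*((k:ℚ)-2)/2)) / ((2*(n:ℚ)-5) * ((n:ℚ)+(k:ℚ)-5)) * N n (k-2))) := by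
          apply mul_le_mul_of_nonneg_left IH (by norm_num)
      _ = (2/3)^(d+1-2) * ((3 * (((k:ℚ)-1)*((k:ℚ)-2)/2)) / ((2*(n:ℚ)-5) * ((n:ℚ)+(k:ℚ)-5)) * N n (k-2)) := by
          have e : d+1-2 = (d-2)+1 := by omega
          rw [e, pow_succ]; ring

lemma geo_aux : ∀ m, 2 ≤ m → ∑ d ∈ Finset.Icc 2 m, ((2:ℚ)/3)^(d-2) ≤ 3 - 2*((2:ℚ)/3)^(m-2) := by
  intro m hm
  induction m, hm using Nat.le_induction with
  | base => norm_num
  | succ m hm ih =>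
    rw [Finset.sum_Icc_succ_top (by omega : 2 ≤ m+1)]
    have e1 : m+1-2 = (m-2)+1 := by omega
    rw [e1, pow_succ]
    have h0 : (0:ℚ) ≤ ((2:ℚ)/3)^(m-2) := by positivity
    linarith

lemma geo (m : ℕ) : ∑ d ∈ Finset.Icc 2 m, ((2:ℚ)/3)^(d-2) ≤ 3 := by
  rcases Nat.lt_or_ge m 2 with h | h
  · have : Finset.Icc 2 m = ∅ := by
      apply Finset.Icc_eq_empty; omega
    simp [this]
  · have := geo_aux m h
    have h0 : (0:ℚ) ≤ ((2:ℚ)/3)^(m-2) := by positivity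
    linarith

set_option maxHeartbeats 1000000 in
/-- Bound on the correction sum in the recurrence. -/
lemma hyp_sum {K n k' : ℕ} (h : Hyp K) (hkK : k'+1 ≤ K) (hkn : k'+3 ≤ n) :
    (∑ d ∈ Finset.Icc 1 (k'+1), ((k'+1).choose d : ℚ) * ddf (2*d-1) *
      (N (n-d) (k'+1-d) - N (n-d+1) (k'+1-d))) ≤ 0
    ∧ -(∑ d ∈ Finset.Icc 1 (k'+1), ((k'+1).choose d : ℚ) * ddf (2*d-1) *
      (N (n-d) (k'+1-d) - N (n-d+1) (k'+1-d))) ≤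
      ((k':ℚ)+1) * N n k' +
        3 * (3 * ((((k':ℚ)+1)) * (k':ℚ) / 2) / ((2*(n:ℚ)-5) * ((n:ℚ)+(k':ℚ)-3)) * N n k') := by
  have hNpos : 0 < N n k' := hyp_pos' h k' (by omega) n (by omega) (by omega)
  have hd1 : (0:ℚ) < 2*(n:ℚ)-5 := by
    have : (3:ℚ) ≤ (n:ℚ) := by exact_mod_cast (by omega : 3 ≤ n)
    linarith
  have hd2 : (0:ℚ) ≤ (n:ℚ)+(k':ℚ)-3 := by
    have a1 : (3:ℚ) ≤ (n:ℚ) := by exact_mod_cast (by omega : 3 ≤ n)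
    have a2 : (0:ℚ) ≤ (k':ℚ) := by positivity
    linarith
  have hV : (0:ℚ) ≤ 3 * ((((k':ℚ)+1)) * (k':ℚ) / 2) / ((2*(n:ℚ)-5) * ((n:ℚ)+(k':ℚ)-3)) * N n k' := by
    apply mul_nonneg
    · exact div_nonneg (by positivity) (mul_nonneg hd1.le hd2)
    · exact hNpos.le
  constructor
  · apply Finset.sum_nonpos
    intro d hd
    rw [Finset.mem_Icc] at hd
    have hmono : N (n-d) (k'+1-d) ≤ N (n-d+1) (k'+1-d) :=
      hyp_mono h (k'+1-d) (by omega) (n-d) (by omega) (by omega)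
    have hc : (0:ℚ) ≤ ((k'+1).choose d : ℚ) * ddf (2*d-1) := by
      have := ddf_pos (2*d-1)
      positivity
    have := mul_nonpos_of_nonneg_of_nonpos hc (by linarith : N (n-d) (k'+1-d) - N (n-d+1) (k'+1-d) ≤ 0)
    exact this
  · rw [← Finset.sum_neg_distrib]
    set V : ℚ := 3 * ((((k':ℚ)+1)) * (k':ℚ) / 2) / ((2*(n:ℚ)-5) * ((n:ℚ)+(k':ℚ)-3)) * N n k' with hVdef
    have hterm : ∀ d ∈ Finset.Icc 1 (k'+1),
        -(((k'+1).choose d : ℚ) * ddf (2*d-1) * (N (n-d) (k'+1-d) - N (n-d+1) (k'+1-d)))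
        ≤ (if d = 1 then ((k':ℚ)+1) * N n k' else ((2:ℚ)/3)^(d-2) * V) := by
      intro d hd
      rw [Finset.mem_Icc] at hd
      have hposlow : 0 < N (n-d) (k'+1-d) :=
        hyp_pos' h (k'+1-d) (by omega) (n-d) (by omega) (by omega)
      rcases Nat.eq_or_lt_of_le hd.1 with h1 | h2
    -- d = 1
      · rw [if_pos h1.symm]
        subst h1
        have e1 : n - 1 + 1 = n := by omega
        have e2 : k' + 1 - 1 = k' := by omega
        have e3 : ddf (2*1-1) = 1 := by norm_num [ddf]
        have e4 : (((k'+1).choose 1 : ℕ):ℚ) = (k':ℚ)+1 := by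
          simp [Nat.choose_one_right]
        rw [e1, e2, e3, e4] at *
        have : 0 < N (n-1) k' := hposlow
        nlinarith [hNpos]
    -- d ≥ 2
      · have hd2' : 2 ≤ d := h2
        rw [if_neg (by omega)]
        have hW := hyp_W h (by omega : 3 ≤ k'+2) (by omega : k'+2 ≤ K+1) (by omega : k'+2+1 ≤ n)
          d hd2' (by omega : d+1 ≤ k'+2)
        have e7 : k'+2-2 = k' := by omega
        rw [e7] at hW
        have e8 : ((((k'+2:ℕ)):ℚ)) = (k':ℚ)+2 := by push_cast; ring
        rw [e8] at hW
        have e9 : (3 * (((k':ℚ)+2-1)*((k':ℚ)+2-2)/2)) / ((2*(n:ℚ)-5) * ((n:ℚ)+((k':ℚ)+2)-5))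
            = 3 * ((((k':ℚ)+1)) * (k':ℚ) / 2) / ((2*(n:ℚ)-5) * ((n:ℚ)+(k':ℚ)-3)) := by
          ring_nf
        rw [e9] at hW
        have hc : (0:ℚ) ≤ ((k'+1).choose d : ℚ) * ddf (2*d-1) := by
          have := ddf_pos (2*d-1)
          positivity
        calc -(((k'+1).choose d : ℚ) * ddf (2*d-1) * (N (n-d) (k'+1-d) - N (n-d+1) (k'+1-d)))
            = ((k'+1).choose d : ℚ) * ddf (2*d-1) * (N (n-d+1) (k'+1-d) - N (n-d) (k'+1-d)) := by
              ring
          _ ≤ ((k'+1).choose d : ℚ) * ddf (2*d-1) * N (n-d+1) (k'+1-d) := by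
              nlinarith [hposlow, hc]
          _ ≤ ((2:ℚ)/3)^(d-2) * V := hW
    calc (∑ d ∈ Finset.Icc 1 (k'+1),
          -(((k'+1).choose d : ℚ) * ddf (2*d-1) * (N (n-d) (k'+1-d) - N (n-d+1) (k'+1-d))))
        ≤ ∑ d ∈ Finset.Icc 1 (k'+1), (if d = 1 then ((k':ℚ)+1) * N n k' else ((2:ℚ)/3)^(d-2) * V) :=
          Finset.sum_le_sum hterm
      _ ≤ ((k':ℚ)+1) * N n k' + 3 * V := by
          have hsplit : Finset.Icc 1 (k'+1) = insert 1 (Finset.Icc 2 (k'+1)) := by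
            ext x; simp only [Finset.mem_Icc, Finset.mem_insert]; omega
          rw [hsplit, Finset.sum_insert (by simp)]
          rw [if_pos rfl]
          have : ∑ d ∈ Finset.Icc 2 (k'+1), (if d = 1 then ((k':ℚ)+1) * N n k' else ((2:ℚ)/3)^(d-2) * V)
              = ∑ d ∈ Finset.Icc 2 (k'+1), ((2:ℚ)/3)^(d-2) * V := by
            apply Finset.sum_congr rfl
            intro x hx
            rw [Finset.mem_Icc] at hx
            rw [if_neg (by omega)]
          rw [this, ← Finset.sum_mul]
          have := geo (k'+1)
          nlinarith [hV, geo (k'+1)]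

set_option maxHeartbeats 1000000 in
theorem key : ∀ k, Hyp k := by
  intro k
  induction k with
  | zero => intro j hj1 hj0; omega
  | succ k hk =>
    intro j hj1 hjk m hm hjm
    rcases Nat.lt_or_ge j (k+1) with hlt | hge
    · exact hk j hj1 (by omega) m hm hjm
    · have hjeq : j = k+1 := by omega
      subst hjeq
      -- cases on j = k+1
      rcases Nat.lt_or_ge k 1 with hk0 | hk1
      · -- j = 1
        have hk0' : k = 0 := by omega
        subst hk0'
        rw [N_one]
        have hd := (ddf_pos (2*m-5)).le
        have hmQ : (3:ℚ) ≤ (m:ℚ) := by exact_mod_cast hm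
        constructor
        · rw [N_zero]
          push_cast
          nlinarith
        · rw [N_zero]
          push_cast
          nlinarith
      · -- j = k+1 ≥ 2 ; write k = k'+1, j = k'+2
        obtain ⟨k', rfl⟩ : ∃ k'', k = k''+1 := ⟨k-1, by omega⟩
        rw [N_rec]
        have hsum := hyp_sum hk (by omega : k'+1 ≤ k'+1) (by omega : k'+3 ≤ m)
        set S : ℚ := ∑ d ∈ Finset.Icc 1 (k'+1), ((k'+1).choose d : ℚ) * ddf (2*d-1) *
          (N (m-d) (k'+1-d) - N (m-d+1) (k'+1-d)) with hS
        have hN2pos : 0 < N m k' := hyp_pos' hk k' (by omega) m (by omega) (by omega)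
        have hN1pos : 0 < N m (k'+1) := hyp_pos hk (k'+1) (by omega) m (by omega) (by omega)
        have hlow := (hk (k'+1) (by omega) (by omega) m (by omega) (by omega)).1
        -- hlow : (m + (k'+1) - 3) * N m k' ≤ N m (k'+1)    (with casts)
        have e0 : ((k'+1:ℕ):ℚ) = (k':ℚ)+1 := by push_cast; ring
        have e1 : (k'+1) - 1 = k' := by omega
        rw [e0, e1] at hlow
        have hmQ : ((k':ℚ)+3) ≤ (m:ℚ) := by exact_mod_cast (by omega : k'+3 ≤ m)
        have hkQ : (0:ℚ) ≤ (k':ℚ) := by positivity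
        -- index normalizations in the goal
        have g1 : (k'+1+1) - 1 = k'+1 := by omega
        rw [g1]
        constructor
        · -- lower bound: need 0 ≤ (k'+1) * N m k' + (1/2) * S
          have hVle : 3 * (3 * ((((k':ℚ)+1)) * (k':ℚ) / 2) / ((2*(m:ℚ)-5) * ((m:ℚ)+(k':ℚ)-3)) * N m k')
              ≤ ((k':ℚ)+1) * N m k' := by
            rcases Nat.eq_zero_or_pos k' with rfl | hk'pos
            · norm_num
              positivity
            · have hk1Q : (1:ℚ) ≤ (k':ℚ) := by exact_mod_cast hk'pos
              have hda : (0:ℚ) < 2*(m:ℚ)-5 := by linarith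
              have hdb : (0:ℚ) < (m:ℚ)+(k':ℚ)-3 := by linarith
              have hD : (0:ℚ) < (2*(m:ℚ)-5) * ((m:ℚ)+(k':ℚ)-3) := mul_pos hda hdb
              have erw : 3 * (3 * ((((k':ℚ)+1)) * (k':ℚ) / 2) / ((2*(m:ℚ)-5) * ((m:ℚ)+(k':ℚ)-3)) * N m k')
                  = (9 * ((((k':ℚ)+1)) * (k':ℚ) / 2) * N m k') / ((2*(m:ℚ)-5) * ((m:ℚ)+(k':ℚ)-3)) := by
                ring
              rw [erw, div_le_iff₀ hD]
              have hfac : (9:ℚ) * (k':ℚ) ≤ 2 * ((2*(m:ℚ)-5) * ((m:ℚ)+(k':ℚ)-3)) := by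
                have q1 : 2*(m:ℚ)-5 ≥ 2*(k':ℚ)+1 := by linarith
                have q2 : (m:ℚ)+(k':ℚ)-3 ≥ 2*(k':ℚ) := by linarith
                have q3 : (2*(m:ℚ)-5) * ((m:ℚ)+(k':ℚ)-3) ≥ (2*(k':ℚ)+1)*(2*(k':ℚ)) := by
                  apply mul_le_mul q1 q2 (by linarith) (by linarith)
                nlinarith
              nlinarith [hN2pos, mul_le_mul_of_nonneg_right hfac (by positivity : (0:ℚ) ≤ ((k':ℚ)+1) * N m k' / 2)]
          have : -S ≤ 2 * (((k':ℚ)+1) * N m k') := by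
            have := hsum.2
            linarith
          push_cast
          nlinarith [this]
        · -- upper bound: need (k'+1) * N m k' + (1/2) * S ≤ N m (k'+1)
          have hS0 : S ≤ 0 := hsum.1
          have hstep : ((k':ℚ)+1) * N m k' ≤ N m (k'+1) := by
            have : ((k':ℚ)+1) ≤ (m:ℚ)+((k':ℚ)+1)-3 := by linarith
            nlinarith [hN2pos, hlow]
          push_cast
          nlinarith [hS0, hstep]

set_option maxHeartbeats 1000000 in
/-- Bound on the `d ≥ 2` part of the correction sum. -/
lemma hyp_sum2 {K n k' : ℕ} (h : Hyp K) (hkK : k'+1 ≤ K) (hkn : k'+3 ≤ n) :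
    (∑ d ∈ Finset.Icc 2 (k'+1), ((k'+1).choose d : ℚ) * ddf (2*d-1) *
      (N (n-d) (k'+1-d) - N (n-d+1) (k'+1-d))) ≤ 0
    ∧ -(∑ d ∈ Finset.Icc 2 (k'+1), ((k'+1).choose d : ℚ) * ddf (2*d-1) *
      (N (n-d) (k'+1-d) - N (n-d+1) (k'+1-d))) ≤
      3 * (3 * ((((k':ℚ)+1)) * (k':ℚ) / 2) / ((2*(n:ℚ)-5) * ((n:ℚ)+(k':ℚ)-3)) * N n k') := by
  have hNpos : 0 < N n k' := hyp_pos' h k' (by omega) n (by omega) (by omega)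
  have hd1 : (0:ℚ) < 2*(n:ℚ)-5 := by
    have : (3:ℚ) ≤ (n:ℚ) := by exact_mod_cast (by omega : 3 ≤ n)
    linarith
  have hd2 : (0:ℚ) ≤ (n:ℚ)+(k':ℚ)-3 := by
    have a1 : (3:ℚ) ≤ (n:ℚ) := by exact_mod_cast (by omega : 3 ≤ n)
    have a2 : (0:ℚ) ≤ (k':ℚ) := by positivity
    linarith
  have hV : (0:ℚ) ≤ 3 * ((((k':ℚ)+1)) * (k':ℚ) / 2) / ((2*(n:ℚ)-5) * ((n:ℚ)+(k':ℚ)-3)) * N n k' := by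
    apply mul_nonneg
    · exact div_nonneg (by positivity) (mul_nonneg hd1.le hd2)
    · exact hNpos.le
  constructor
  · apply Finset.sum_nonpos
    intro d hd
    rw [Finset.mem_Icc] at hd
    have hmono : N (n-d) (k'+1-d) ≤ N (n-d+1) (k'+1-d) :=
      hyp_mono h (k'+1-d) (by omega) (n-d) (by omega) (by omega)
    have hc : (0:ℚ) ≤ ((k'+1).choose d : ℚ) * ddf (2*d-1) := by
      have := ddf_pos (2*d-1)
      positivity
    exact mul_nonpos_of_nonneg_of_nonpos hc (by linarith)
  · rw [← Finset.sum_neg_distrib]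
    set V : ℚ := 3 * ((((k':ℚ)+1)) * (k':ℚ) / 2) / ((2*(n:ℚ)-5) * ((n:ℚ)+(k':ℚ)-3)) * N n k' with hVdef
    have hterm : ∀ d ∈ Finset.Icc 2 (k'+1),
        -(((k'+1).choose d : ℚ) * ddf (2*d-1) * (N (n-d) (k'+1-d) - N (n-d+1) (k'+1-d)))
        ≤ ((2:ℚ)/3)^(d-2) * V := by
      intro d hd
      rw [Finset.mem_Icc] at hd
      have hposlow : 0 < N (n-d) (k'+1-d) :=
        hyp_pos' h (k'+1-d) (by omega) (n-d) (by omega) (by omega)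
      have hW := hyp_W h (by omega : 3 ≤ k'+2) (by omega : k'+2 ≤ K+1) (by omega : k'+2+1 ≤ n)
        d hd.1 (by omega : d+1 ≤ k'+2)
      have e7 : k'+2-2 = k' := by omega
      rw [e7] at hW
      have e8 : ((((k'+2:ℕ)):ℚ)) = (k':ℚ)+2 := by push_cast; ring
      rw [e8] at hW
      have e9 : (3 * (((k':ℚ)+2-1)*((k':ℚ)+2-2)/2)) / ((2*(n:ℚ)-5) * ((n:ℚ)+((k':ℚ)+2)-5))
          = 3 * ((((k':ℚ)+1)) * (k':ℚ) / 2) / ((2*(n:ℚ)-5) * ((n:ℚ)+(k':ℚ)-3)) := by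
        ring_nf
      rw [e9] at hW
      have hc : (0:ℚ) ≤ ((k'+1).choose d : ℚ) * ddf (2*d-1) := by
        have := ddf_pos (2*d-1)
        positivity
      calc -(((k'+1).choose d : ℚ) * ddf (2*d-1) * (N (n-d) (k'+1-d) - N (n-d+1) (k'+1-d)))
          = ((k'+1).choose d : ℚ) * ddf (2*d-1) * (N (n-d+1) (k'+1-d) - N (n-d) (k'+1-d)) := by
            ring
        _ ≤ ((k'+1).choose d : ℚ) * ddf (2*d-1) * N (n-d+1) (k'+1-d) := by
            nlinarith [hposlow, hc]
        _ ≤ ((2:ℚ)/3)^(d-2) * V := hW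
    calc (∑ d ∈ Finset.Icc 2 (k'+1),
          -(((k'+1).choose d : ℚ) * ddf (2*d-1) * (N (n-d) (k'+1-d) - N (n-d+1) (k'+1-d))))
        ≤ ∑ d ∈ Finset.Icc 2 (k'+1), ((2:ℚ)/3)^(d-2) * V := Finset.sum_le_sum hterm
      _ = (∑ d ∈ Finset.Icc 2 (k'+1), ((2:ℚ)/3)^(d-2)) * V := by rw [Finset.sum_mul]
      _ ≤ 3 * V := by nlinarith [hV, geo (k'+1)]


set_option maxHeartbeats 2000000

/-- There are `C > 0` and `n₀` such that for all `n ≥ n₀` and `1 ≤ k ≤ n - 1`,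
`|N(n,k) - (n + k - 3 + k/(2(n+k))) N(n,k-1)| ≤ (C/n) N(n,k-1)`. -/
theorem N_approx_recurrence :
    ∃ C : ℚ, 0 < C ∧ ∃ n₀ : ℕ, ∀ n : ℕ, n₀ ≤ n → ∀ k : ℕ, 1 ≤ k → k ≤ n - 1 →
      |N n k - ((n : ℚ) + k - 3 + (k : ℚ) / (2 * ((n : ℚ) + k))) * N n (k - 1)|
        ≤ C / n * N n (k - 1) := by
  refine ⟨10, by norm_num, 100, ?_⟩
  intro n hn k hk1 hkn
  have hkn' : k + 1 ≤ n := by omega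
  have hnQ : (100:ℚ) ≤ (n:ℚ) := by exact_mod_cast hn
  have hnpos : (0:ℚ) < (n:ℚ) := by linarith
  rcases Nat.lt_or_ge k 2 with hk2 | hk2
  · -- k = 1
    have hkeq : k = 1 := by omega
    subst hkeq
    have h0 : 0 < N n 0 := N_zero_pos n
    rw [N_one]
    simp only [Nat.cast_one]
    have e : ((n:ℚ) - 2) * N n 0 - ((n:ℚ) + 1 - 3 + 1 / (2 * ((n:ℚ) + 1))) * N n (1-1)
        = -(1 / (2 * ((n:ℚ) + 1))) * N n 0 := by
      have e1 : (1:ℕ) - 1 = 0 := rfl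
      rw [e1, N_zero]
      ring
    rw [N_zero] at e ⊢
    rw [e]
    rw [abs_mul, abs_neg]
    have hA : |1 / (2 * ((n:ℚ) + 1))| = 1 / (2 * ((n:ℚ) + 1)) := abs_of_pos (by positivity)
    rw [hA, abs_of_pos (by rw [← N_zero] ; exact h0)]
    apply mul_le_mul_of_nonneg_right _ (by rw [← N_zero]; exact h0.le)
    rw [div_le_div_iff₀ (by positivity) hnpos]
    nlinarith
  · -- k = k' + 2
    obtain ⟨k', rfl⟩ : ∃ k'', k = k''+2 := ⟨k-2, by omega⟩
    have hKfull := key (k'+2)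
    have hkQ : (0:ℚ) ≤ (k':ℚ) := by positivity
    have hknQ : (k':ℚ) + 3 ≤ (n:ℚ) := by exact_mod_cast (by omega : k'+3 ≤ n)
    set X : ℚ := N n k' with hX
    set Y : ℚ := N (n-1) k' with hY
    set Z : ℚ := N n (k'+1) with hZ
    have hXpos : 0 < X := hyp_pos' hKfull k' (by omega) n (by omega) (by omega)
    have hYpos : 0 < Y := hyp_pos' hKfull k' (by omega) (n-1) (by omega) (by omega)
    have hZpos : 0 < Z := hyp_pos hKfull (k'+1) (by omega) n (by omega) (by omega)
    -- growth: (2(n-1)-3) * Y ≤ X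
    have hgrow : (2*((n-1:ℕ):ℚ)-3) * Y ≤ N ((n-1)+1) k' := hyp_grow hKfull k' (by omega) (n-1) (by omega) (by omega)
    have en : (n-1)+1 = n := by omega
    rw [en] at hgrow
    have enQ : ((n-1:ℕ):ℚ) = (n:ℚ)-1 := by
      push_cast [Nat.cast_sub (by omega : 1 ≤ n)]; ring
    rw [enQ] at hgrow
    -- hgrow : (2n-5)*Y ≤ X
    have hgrow' : (2*(n:ℚ)-5) * Y ≤ X := by
      have : (2*((n:ℚ)-1)-3) = 2*(n:ℚ)-5 := by ring
      rw [this] at hgrow; exact hgrow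
    have hZbounds := hKfull (k'+1) (by omega) (by omega) n (by omega) (by omega)
    have e0 : ((k'+1:ℕ):ℚ) = (k':ℚ)+1 := by push_cast; ring
    have e1 : (k'+1) - 1 = k' := by omega
    rw [e0, e1] at hZbounds
    have hZlo : ((n:ℚ)+(k':ℚ)-2) * X ≤ Z := by
      have := hZbounds.1; rw [show (n:ℚ)+((k':ℚ)+1)-3 = (n:ℚ)+(k':ℚ)-2 by ring] at this; exact this
    have hZhi : Z ≤ ((n:ℚ)+(k':ℚ)-1) * X := by
      have := hZbounds.2; rw [show (n:ℚ)+((k':ℚ)+1)-2 = (n:ℚ)+(k':ℚ)-1 by ring] at this; exact this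
    -- the recurrence and sum split
    have hrec := N_rec n k'
    have hsum2 := hyp_sum2 hKfull (by omega : k'+1 ≤ k'+2) (by omega : k'+3 ≤ n)
    set S2 : ℚ := ∑ d ∈ Finset.Icc 2 (k'+1), ((k'+1).choose d : ℚ) * ddf (2*d-1) *
      (N (n-d) (k'+1-d) - N (n-d+1) (k'+1-d)) with hS2
    have hsplit : (∑ d ∈ Finset.Icc 1 (k'+1), ((k'+1).choose d : ℚ) * ddf (2*d-1) *
        (N (n-d) (k'+1-d) - N (n-d+1) (k'+1-d))) = ((k':ℚ)+1) * (Y - X) + S2 := by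
      have hins : Finset.Icc 1 (k'+1) = insert 1 (Finset.Icc 2 (k'+1)) := by
        ext x; simp only [Finset.mem_Icc, Finset.mem_insert]; omega
      rw [hins, Finset.sum_insert (by simp)]
      congr 1
      have i1 : k'+1-1 = k' := by omega
      have i2 : n-1+1 = n := by omega
      have i3 : ddf (2*1-1) = 1 := by norm_num [ddf]
      have i4 : (((k'+1).choose 1 : ℕ):ℚ) = (k':ℚ)+1 := by simp [Nat.choose_one_right]
      rw [i1, i2, i3, i4]
      ring
    rw [hsplit] at hrec
    -- V bound : -S2 ≤ 3V ≤ (5/2) X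
    have hVX : 3 * (3 * ((((k':ℚ)+1)) * (k':ℚ) / 2) / ((2*(n:ℚ)-5) * ((n:ℚ)+(k':ℚ)-3)) * X)
        ≤ (5/2) * X := by
      have hda : (0:ℚ) < 2*(n:ℚ)-5 := by linarith
      have hdb : (0:ℚ) < (n:ℚ)+(k':ℚ)-3 := by linarith
      have hD : (0:ℚ) < (2*(n:ℚ)-5) * ((n:ℚ)+(k':ℚ)-3) := mul_pos hda hdb
      have erw : 3 * (3 * ((((k':ℚ)+1)) * (k':ℚ) / 2) / ((2*(n:ℚ)-5) * ((n:ℚ)+(k':ℚ)-3)) * X)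
          = (9 * ((((k':ℚ)+1)) * (k':ℚ) / 2) * X) / ((2*(n:ℚ)-5) * ((n:ℚ)+(k':ℚ)-3)) := by ring
      rw [erw, div_le_iff₀ hD]
      -- 9 (k'+1) k' / 2 * X ≤ (5/2) X (2n-5)(n+k'-3)
      have q1 : 9*((k':ℚ)+1) ≤ 5*(2*(n:ℚ)-5) := by linarith
      have q2 : 9*((k':ℚ)+1)*(k':ℚ) ≤ 5*(2*(n:ℚ)-5)*((n:ℚ)+(k':ℚ)-3) := by nlinarith
      nlinarith [mul_le_mul_of_nonneg_right q2 (hXpos.le)]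
    have hS2a : S2 ≤ 0 := hsum2.1
    have hS2b : -S2 ≤ (5/2) * X := le_trans hsum2.2 hVX
    -- rewrite the goal
    have ek : ((k'+2:ℕ):ℚ) = (k':ℚ)+2 := by push_cast; ring
    have ekm : (k'+2) - 1 = k'+1 := by omega
    rw [ekm, ek]
    set P : ℚ := (n:ℚ) + ((k':ℚ)+2) with hP
    have hPpos : (0:ℚ) < P := by rw [hP]; linarith
    have hE : N n (k'+2) - ((n:ℚ) + ((k':ℚ)+2) - 3 + ((k':ℚ)+2) / (2*P)) * Z
        = ((k':ℚ)+1)/2 * (X + Y) - (((k':ℚ)+2)/(2*P)) * Z + (1/2) * S2 := by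
      rw [hrec]
      push_cast
      ring
    rw [hE]
    -- |E| ≤ 2 X ≤ 10/n * Z
    have goal1 : 2*P * (((k':ℚ)+1)/2 * (X + Y) - (((k':ℚ)+2)/(2*P)) * Z + (1/2) * S2)
        ≤ 4*P*X := by
      have hq : 2*P * (((k':ℚ)+1)/2 * (X + Y) - (((k':ℚ)+2)/(2*P)) * Z + (1/2) * S2)
          = P*((k':ℚ)+1)*(X+Y) - ((k':ℚ)+2)*Z + P*S2 := by
        field_simp
      rw [hq]
      have u1 : P*S2 ≤ 0 := mul_nonpos_of_nonneg_of_nonpos hPpos.le hS2a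
      have u2 : ((k':ℚ)+1)*P*Y ≤ 2*(n:ℚ)*X := by
        have a : ((k':ℚ)+1)*P ≤ 2*(n:ℚ)*(2*(n:ℚ)-5) := by nlinarith
        have b : (((k':ℚ)+1)*P)*Y ≤ (2*(n:ℚ)*(2*(n:ℚ)-5))*Y := mul_le_mul_of_nonneg_right a hYpos.le
        have c : 2*(n:ℚ)*((2*(n:ℚ)-5)*Y) ≤ 2*(n:ℚ)*X := mul_le_mul_of_nonneg_left hgrow' (by linarith)
        nlinarith [b, c]
      have u3 : (((k':ℚ)+2))*(((n:ℚ)+(k':ℚ)-2)*X) ≤ ((k':ℚ)+2)*Z := mul_le_mul_of_nonneg_left hZlo (by linarith)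
      nlinarith [u1, u2, u3, mul_nonneg (by linarith : (0:ℚ) ≤ 3*(n:ℚ)+(k':ℚ)+2) hXpos.le]
    have goal2 : -(4*P*X) ≤ 2*P * (((k':ℚ)+1)/2 * (X + Y) - (((k':ℚ)+2)/(2*P)) * Z + (1/2) * S2) := by
      have hq : 2*P * (((k':ℚ)+1)/2 * (X + Y) - (((k':ℚ)+2)/(2*P)) * Z + (1/2) * S2)
          = P*((k':ℚ)+1)*(X+Y) - ((k':ℚ)+2)*Z + P*S2 := by
        field_simp
      rw [hq]
      have u1 : -( (5/2)*P*X ) ≤ P*S2 := by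
        have : P * (-S2) ≤ P * ((5/2)*X) := mul_le_mul_of_nonneg_left hS2b hPpos.le
        nlinarith [this]
      have u2 : (0:ℚ) ≤ P*((k':ℚ)+1)*Y := by positivity
      have u3 : ((k':ℚ)+2)*Z ≤ (((k':ℚ)+2))*(((n:ℚ)+(k':ℚ)-1)*X) := mul_le_mul_of_nonneg_left hZhi (by linarith)
      nlinarith [u1, u2, u3, mul_nonneg (by linarith : (0:ℚ) ≤ (n:ℚ)/2 + (k':ℚ)*4 + 10) hXpos.le]
    have habs : |(((k':ℚ)+1)/2 * (X + Y) - (((k':ℚ)+2)/(2*P)) * Z + (1/2) * S2)| ≤ 2*X := by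
      rw [abs_le]
      constructor
      · have := goal2
        nlinarith [hPpos]
      · have := goal1
        nlinarith [hPpos]
    calc |(((k':ℚ)+1)/2 * (X + Y) - (((k':ℚ)+2)/(2*P)) * Z + (1/2) * S2)| ≤ 2*X := habs
      _ ≤ 10 / (n:ℚ) * Z := by
        rw [div_mul_eq_mul_div, le_div_iff₀ hnpos]
        -- 2 X n ≤ 10 Z
        have : 10*(((n:ℚ)+(k':ℚ)-2)*X) ≤ 10*Z := mul_le_mul_of_nonneg_left hZlo (by norm_num)
        nlinarith [this]
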